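/- Let (X,r) be a square-free solution with abelian permutation group G(X,r), and let Y, Z be two distinct G(X,r)-orbits of X. Then for all x, y ∈ Y and α, β ∈ Z the strong-twisted-union conditions hold: L_{ˣα} agrees with L_α on Y, and L_{ᵅx} agrees with L_x on Z; equivalently ^{(ʸα)}x = ᵅx and ^{(ᵝx)}α = ˣα. -/
import Mathlib


namespace YBPaper

variable {X : Type*}

/-- Left translation: `lact r x y = ˣy`. -/
def lact (r : X × X → X × X) (x y : X) : X := (r (x, y)).1

/-- Right translation: `ract r x y = xʸ`. -/
def ract (r : X × X → X × X) (x y : X) : X := (r (x, y)).2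

def r12 (r : X × X → X × X) : X × X × X → X × X × X :=
  fun p => ((r (p.1, p.2.1)).1, (r (p.1, p.2.1)).2, p.2.2)

def r23 (r : X × X → X × X) : X × X × X → X × X × X :=
  fun p => (p.1, r (p.2.1, p.2.2))

/-- A non-degenerate involutive square-free set-theoretic solution of the YBE. -/
structure IsSquareFreeSolution (r : X × X → X × X) : Prop where
  nondegL : ∀ x : X, Function.Bijective fun y => (r (x, y)).1
  nondegR : ∀ y : X, Function.Bijective fun x => (r (x, y)).2
  invol : ∀ p : X × X, r (r p) = p
  sqfree : ∀ x : X, r (x, x) = (x, x)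
  braided : ∀ p : X × X × X, r12 r (r23 r (r12 r p)) = r23 r (r12 r (r23 r p))

/-- `relk l k x y` means the images of `x` and `y` in the `k`-th retract coincide. -/
def relk (l : X → X → X) : ℕ → X → X → Prop
  | 0 => fun x y => x = y
  | (k+1) => fun x y => ∀ z : X, relk l k (l x z) (l y z)

/-- `mplLe l m` : the `m`-th retract is a one-element solution, i.e. `mpl ≤ m`. -/
def mplLe (l : X → X → X) (m : ℕ) : Prop := ∀ x y : X, relk l m x y

/-- `mplEq l m` : the multipermutation level is exactly `m`. -/
def mplEq (l : X → X → X) (m : ℕ) : Prop := mplLe l m ∧ ∀ k < m, ¬ mplLe l k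

/-- The set of left translations, as permutations. -/
def lperms (r : X × X → X × X) : Set (Equiv.Perm X) :=
  {σ : Equiv.Perm X | ∃ x : X, ∀ y : X, σ y = (r (x, y)).1}

/-- The YB permutation group `𝒢(X,r)`, generated by the left translations. -/
def Gcal (r : X × X → X × X) : Subgroup (Equiv.Perm X) := Subgroup.closure (lperms r)



noncomputable def permL (r : X × X → X × X) (h : IsSquareFreeSolution r) (x : X) :
    Equiv.Perm X := Equiv.ofBijective _ (h.nondegL x)

lemma permL_apply (r : X × X → X × X) (h : IsSquareFreeSolution r) (x y : X) :
    permL r h x y = lact r x y := rfl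

lemma permL_mem (r : X × X → X × X) (h : IsSquareFreeSolution r) (x : X) :
    permL r h x ∈ Gcal r :=
  Subgroup.subset_closure ⟨x, fun _ => rfl⟩

/-- The left action preserves orbits. -/
lemma lact_mem_orbit (r : X × X → X × X) (h : IsSquareFreeSolution r) (x z : X) :
    lact r x z ∈ MulAction.orbit (↥(Gcal r)) z :=
  ⟨⟨permL r h x, permL_mem r h x⟩, rfl⟩

/-- `y^α` is in the orbit of `y`. -/
lemma ract_orbit (r : X × X → X × X) (h : IsSquareFreeSolution r) (y α : X) :
    MulAction.orbit (↥(Gcal r)) (ract r y α) = MulAction.orbit (↥(Gcal r)) y := by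
  symm
  apply MulAction.orbit_eq_iff.mpr
  refine ⟨⟨permL r h (lact r y α), permL_mem r h _⟩, ?_⟩
  have hi := h.invol (y, α)
  show permL r h (lact r y α) (ract r y α) = y
  have : r (lact r y α, ract r y α) = (y, α) := by
    simpa [lact, ract] using hi
  show (r (lact r y α, ract r y α)).1 = y
  rw [this]

/-- With abelian `𝒢(X,r)`, the left translation `L_α` fixes the orbit of `α` pointwise. -/
lemma lact_fix (r : X × X → X × X) (h : IsSquareFreeSolution r)
    (hab : ∀ σ ∈ Gcal r, ∀ τ ∈ Gcal r, σ * τ = τ * σ) {α β : X}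
    (hb : β ∈ MulAction.orbit (↥(Gcal r)) α) : lact r α β = β := by
  obtain ⟨⟨g, hg⟩, rfl⟩ := hb
  have hc := hab _ (permL_mem r h α) g hg
  have hsm : (⟨g, hg⟩ : ↥(Gcal r)) • α = g α := rfl
  have hαα : lact r α α = α := by simp [lact, h.sqfree]
  calc lact r α ((⟨g, hg⟩ : ↥(Gcal r)) • α)
      = (permL r h α * g) α := by rw [hsm]; rfl
    _ = (g * permL r h α) α := by rw [hc]
    _ = g (lact r α α) := rfl
    _ = (⟨g, hg⟩ : ↥(Gcal r)) • α := by rw [hαα]; rfl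

/-- The YBE condition l1: `^{ˣy}(^{xʸ}z) = ˣ(ʸz)`. -/
lemma l1 (r : X × X → X × X) (h : IsSquareFreeSolution r) (x y z : X) :
    lact r (lact r x y) (lact r (ract r x y) z) = lact r x (lact r y z) := by
  have := congrArg Prod.fst (h.braided (x, y, z))
  simpa [r12, r23, lact, ract] using this

/-- if `𝒢(X,r)` is abelian, then any two distinct orbits satisfy the
strong-twisted-union conditions: `^{(ʸα)}x = ᵅx` and `^{(ᵝx)}α = ˣα`. -/
theorem stmt8 {X : Type*} (r : X × X → X × X) (h : IsSquareFreeSolution r)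
    (hab : ∀ σ ∈ Gcal r, ∀ τ ∈ Gcal r, σ * τ = τ * σ)
    (y0 z0 : X)
    (hdist : MulAction.orbit (↥(Gcal r)) y0 ≠ MulAction.orbit (↥(Gcal r)) z0) :
    ∀ x ∈ MulAction.orbit (↥(Gcal r)) y0, ∀ y ∈ MulAction.orbit (↥(Gcal r)) y0,
      ∀ α ∈ MulAction.orbit (↥(Gcal r)) z0, ∀ β ∈ MulAction.orbit (↥(Gcal r)) z0,
        lact r (lact r y α) x = lact r α x ∧ lact r (lact r β x) α = lact r x α := by
  intro x hx y hy α hα β hβ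
  have Ox : MulAction.orbit (↥(Gcal r)) x = MulAction.orbit (↥(Gcal r)) y0 :=
    MulAction.orbit_eq_iff.mpr hx
  have Oy : MulAction.orbit (↥(Gcal r)) y = MulAction.orbit (↥(Gcal r)) y0 :=
    MulAction.orbit_eq_iff.mpr hy
  have Oα : MulAction.orbit (↥(Gcal r)) α = MulAction.orbit (↥(Gcal r)) z0 :=
    MulAction.orbit_eq_iff.mpr hα
  have Oβ : MulAction.orbit (↥(Gcal r)) β = MulAction.orbit (↥(Gcal r)) z0 :=
    MulAction.orbit_eq_iff.mpr hβ
  constructor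
  · have h1 := l1 r h y α x
    have e1 : lact r (ract r y α) x = x := by
      apply lact_fix r h hab
      rw [ract_orbit r h y α, Oy]; exact hx
    have e2 : lact r y (lact r α x) = lact r α x := by
      apply lact_fix r h hab
      rw [Oy, ← Ox]; exact lact_mem_orbit r h α x
    rw [e1, e2] at h1
    exact h1
  · have h2 := l1 r h β x α
    have e3 : lact r (ract r β x) α = α := by
      apply lact_fix r h hab
      rw [ract_orbit r h β x, Oβ]; exact hα
    have e4 : lact r β (lact r x α) = lact r x α := by
      apply lact_fix r h hab
      rw [Oβ, ← Oα]; exact lact_mem_orbit r h x α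
    rw [e3, e4] at h2
    exact h2

end YBPaper
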